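/- Let G be a group, A ⊆ G a nonempty finite set, and ε ∈ (0,1). Let X = St^ℓ_{ε²/162}(A) and fix ν ∈ (0,1) with ν ≤ |X|/|A|. Set S = St^r_{εν/9}(A) and A' = {a ∈ A : |Xa \ A| < (ε/9)|X|}. Then for any subset D ⊆ G satisfying A' ⊆ D ⊆ A'S, one has |A △ D| < ε|A|. -/

import Mathlib

open scoped Pointwise symmDiff

/-- `Stab^ℓ_N(A) = {x : |xA △ A| ≤ N}`. -/
def stabL {G : Type*} [Group G] (A : Set G) (N : ℝ) : Set G :=
  {x : G | (((x • A) ∆ A).ncard : ℝ) ≤ N}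

/-- `Stab^r_N(A) = {x : |Ax △ A| ≤ N}`. -/
def stabR {G : Type*} [Group G] (A : Set G) (N : ℝ) : Set G :=
  {x : G | (((A * {x}) ∆ A).ncard : ℝ) ≤ N}

/-- `St^ℓ_ε(A) = Stab^ℓ_{ε|A|}(A)`. -/
def stL {G : Type*} [Group G] (A : Set G) (ε : ℝ) : Set G := stabL A (ε * A.ncard)

/-- `St^r_ε(A) = Stab^r_{ε|A|}(A)`. -/
def stR {G : Type*} [Group G] (A : Set G) (ε : ℝ) : Set G := stabR A (ε * A.ncard)

/-- A family of sets shatters `S` if every subset of `S` is cut out by a member of the family. -/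
def Shatters {α : Type*} (F : Set (Set α)) (S : Set α) : Prop :=
  ∀ T ⊆ S, ∃ f ∈ F, S ∩ f = T

/-- VC-dimension of a set system: the supremum of cardinalities of finite shattered sets. -/
noncomputable def vcDim {α : Type*} (F : Set (Set α)) : ℕ∞ :=
  ⨆ (S : Finset α) (_ : Shatters F ↑S), (S.card : ℕ∞)

/-- The family of left translates `{xA : x ∈ B}`. -/
def leftFam {G : Type*} [Group G] (A B : Set G) : Set (Set G) := (fun x => x • A) '' B

/-- The family of right translates `{Ax : x ∈ B}`. -/
def rightFam {G : Type*} [Group G] (A B : Set G) : Set (Set G) := (fun x => A * {x}) '' B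

/-- `Z^ℓ_ε(A,X) = {g : min(|gX ∩ A|, |gX \ A|) ≥ ε|X|}`. -/
def Zl {G : Type*} [Group G] (A X : Set G) (ε : ℝ) : Set G :=
  {g : G | ε * X.ncard ≤ min (((g • X) ∩ A).ncard : ℝ) (((g • X) \ A).ncard : ℝ)}



section helpers
variable {α β : Type*}

lemma image_diff_pred (f : α → β) (X : Set α) (A : Set β) :
    (f '' X) \ A = f '' {x ∈ X | f x ∉ A} := by
  ext y
  simp only [Set.mem_diff, Set.mem_image, Set.mem_setOf_eq]
  constructor
  · rintro ⟨⟨x, hx, rfl⟩, h⟩; exact ⟨x, ⟨hx, h⟩, rfl⟩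
  · rintro ⟨x, ⟨hx, h⟩, rfl⟩; exact ⟨⟨x, hx, rfl⟩, h⟩

lemma image_inter_pred (f : α → β) (X : Set α) (A : Set β) :
    (f '' X) ∩ A = f '' {x ∈ X | f x ∈ A} := by
  ext y
  simp only [Set.mem_inter_iff, Set.mem_image, Set.mem_setOf_eq]
  constructor
  · rintro ⟨⟨x, hx, rfl⟩, h⟩; exact ⟨x, ⟨hx, h⟩, rfl⟩
  · rintro ⟨x, ⟨hx, h⟩, rfl⟩; exact ⟨⟨x, hx, rfl⟩, h⟩

lemma ncard_sep {X : Set α} (hX : X.Finite) (p : α → Prop) [DecidablePred p] :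
    {x ∈ X | p x}.ncard = (hX.toFinset.filter p).card := by
  rw [← Set.ncard_coe_finset]
  congr 1
  ext x
  simp [hX.mem_toFinset]

lemma smul_set_eq_image {G : Type*} [Group G] (x : G) (A : Set G) :
    x • A = (fun a => x * a) '' A := by
  simp [← Set.image_smul, smul_eq_mul]

end helpers

set_option maxHeartbeats 1000000 in
/-- structure lemma, Lemma 3.4 of the paper: with `X = St^ℓ_{ε²/162}(A)`,
`ν ≤ |X|/|A|`, `S = St^r_{εν/9}(A)` and `A' = {a ∈ A : |Xa \ A| < (ε/9)|X|}`, any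
`D` with `A' ⊆ D ⊆ A'S` satisfies `|A △ D| < ε|A|`. -/
theorem structure_lemma {G : Type*} [Group G] (A : Set G)
    (hA : A.Finite) (hAne : A.Nonempty)
    (ε : ℝ) (hε0 : 0 < ε) (hε1 : ε < 1)
    (ν : ℝ) (hν0 : 0 < ν) (hν1 : ν < 1)
    (X S A' : Set G) (hX : X = stL A (ε ^ 2 / 162))
    (hν : ν ≤ (X.ncard : ℝ) / A.ncard)
    (hS : S = stR A (ε * ν / 9))
    (hA' : A' = {a ∈ A | (((X * {a}) \ A).ncard : ℝ) < ε / 9 * X.ncard}) :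
    ∀ D : Set G, A' ⊆ D → D ⊆ A' * S → ((A ∆ D).ncard : ℝ) < ε * A.ncard := by
  intro D hA'D hDA'S
  classical
  have hAcard : (0:ℝ) < A.ncard := by
    exact_mod_cast (Set.ncard_pos hA).mpr hAne
  -- membership facts
  have hXmem : ∀ x ∈ X, (((x • A) ∆ A).ncard : ℝ) ≤ ε ^ 2 / 162 * A.ncard := by
    intro x hx; rw [hX] at hx; exact hx
  have hSmem : ∀ s ∈ S, (((A * {s}) ∆ A).ncard : ℝ) ≤ ε * ν / 9 * A.ncard := by
    intro s hs; rw [hS] at hs; exact hs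
  -- finiteness of symmetric differences
  have hsymmL : ∀ x : G, ((x • A) ∆ A).Finite := by
    intro x
    exact ((hA.smul_set).union hA).subset (by
      rw [Set.symmDiff_def]
      exact Set.union_subset_union Set.diff_subset Set.diff_subset)
  have hsymmR : ∀ s : G, ((A * {s}) ∆ A).Finite := by
    intro s
    exact ((hA.mul (Set.finite_singleton s)).union hA).subset (by
      rw [Set.symmDiff_def]
      exact Set.union_subset_union Set.diff_subset Set.diff_subset)
  -- X is finite
  have hXfin : X.Finite := by
    apply (hA.mul hA.inv).subset
    intro x hx
    have hb := hXmem x hx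
    by_contra hmem
    have hdisj : ∀ y, y ∈ x • A → y ∉ A := by
      rintro y ⟨a, ha, rfl⟩ hyA
      refine hmem ?_
      rw [Set.mem_mul]
      exact ⟨x * a, hyA, a⁻¹, by simp [ha], by group⟩
    have hsub : A ⊆ (x • A) ∆ A := by
      rw [Set.symmDiff_def]
      intro a ha
      exact Set.mem_union_right _ ⟨ha, fun h => hdisj a h ha⟩
    have h1 : (A.ncard : ℝ) ≤ (((x • A) ∆ A).ncard : ℝ) := by
      exact_mod_cast Set.ncard_le_ncard hsub (hsymmL x)
    have hsq : ε ^ 2 < 1 := by nlinarith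
    nlinarith [mul_lt_mul_of_pos_right hsq hAcard]
  -- S is finite
  have hSfin : S.Finite := by
    apply (hA.inv.mul hA).subset
    intro s hs
    have hb := hSmem s hs
    by_contra hmem
    have hdisj : ∀ y, y ∈ A * {s} → y ∉ A := by
      intro y hy hyA
      rw [Set.mul_singleton] at hy
      obtain ⟨a, ha, rfl⟩ := hy
      refine hmem ?_
      rw [Set.mem_mul]
      exact ⟨a⁻¹, by simp [ha], a * s, hyA, by group⟩
    have hsub : A ⊆ (A * {s}) ∆ A := by
      rw [Set.symmDiff_def]
      intro a ha
      exact Set.mem_union_right _ ⟨ha, fun h => hdisj a h ha⟩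
    have h1 : (A.ncard : ℝ) ≤ (((A * {s}) ∆ A).ncard : ℝ) := by
      exact_mod_cast Set.ncard_le_ncard hsub (hsymmR s)
    have hsq : ε * ν < 1 := by nlinarith
    nlinarith [mul_lt_mul_of_pos_right hsq hAcard]
  have hA'sub : A' ⊆ A := by rw [hA']; exact fun a ha => ha.1
  have hA'fin : A'.Finite := hA.subset hA'sub
  have hXApos : ν * A.ncard ≤ (X.ncard : ℝ) := by
    have h := mul_le_mul_of_nonneg_right hν hAcard.le
    rwa [div_mul_cancel₀ _ (ne_of_gt hAcard)] at h
  have hXpos : (0:ℝ) < X.ncard := lt_of_lt_of_le (by positivity) hXApos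
  set FA := hA.toFinset with hFA
  set FX := hXfin.toFinset with hFX
  have hFXcard : (FX.card : ℝ) = X.ncard := by
    rw [Set.ncard_eq_toFinset_card X hXfin]
  have hFAcard : (FA.card : ℝ) = A.ncard := by
    rw [Set.ncard_eq_toFinset_card A hA]
  ---- Step B : |A \ A'| ≤ ε/18 |A|
  have eB1 : ∀ a : G, ((X * {a}) \ A).ncard = (FX.filter (fun x => x * a ∉ A)).card := by
    intro a
    rw [Set.mul_singleton, image_diff_pred,
      Set.ncard_image_of_injective _ (mul_left_injective a), ncard_sep hXfin]
  have eB2 : ∀ x : G, ((x • A) \ A).ncard = (FA.filter (fun a => x * a ∉ A)).card := by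
    intro x
    rw [smul_set_eq_image, image_diff_pred,
      Set.ncard_image_of_injective _ (mul_right_injective x), ncard_sep hA]
  have hsum1 : ∑ a ∈ FA, (((X * {a}) \ A).ncard : ℝ)
      = ∑ x ∈ FX, (((x • A) \ A).ncard : ℝ) := by
    have : ∑ a ∈ FA, ((X * {a}) \ A).ncard = ∑ x ∈ FX, ((x • A) \ A).ncard := by
      simp_rw [eB1, eB2, Finset.card_filter]
      exact Finset.sum_comm
    exact_mod_cast congrArg Nat.cast this
  have hub1 : ∑ x ∈ FX, (((x • A) \ A).ncard : ℝ) ≤ X.ncard * (ε ^ 2 / 162 * A.ncard) := by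
    calc ∑ x ∈ FX, (((x • A) \ A).ncard : ℝ)
        ≤ ∑ _x ∈ FX, (ε ^ 2 / 162 * A.ncard) := by
          apply Finset.sum_le_sum
          intro x hx
          have hxX : x ∈ X := hXfin.mem_toFinset.mp hx
          refine le_trans ?_ (hXmem x hxX)
          have : ((x • A) \ A).ncard ≤ ((x • A) ∆ A).ncard := by
            apply Set.ncard_le_ncard _ (hsymmL x)
            rw [Set.symmDiff_def]; exact Set.subset_union_left
          exact_mod_cast this
      _ = X.ncard * (ε ^ 2 / 162 * A.ncard) := by
          rw [Finset.sum_const, nsmul_eq_mul, hFXcard]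
  set B := A \ A' with hB
  have hBfin : B.Finite := hA.subset Set.diff_subset
  have hBbound : ∀ a ∈ B, ε / 9 * X.ncard ≤ (((X * {a}) \ A).ncard : ℝ) := by
    rintro a ⟨haA, haA'⟩
    by_contra h
    exact haA' (by rw [hA']; exact ⟨haA, lt_of_not_ge h⟩)
  have hlb1 : (B.ncard : ℝ) * (ε / 9 * X.ncard) ≤ ∑ a ∈ FA, (((X * {a}) \ A).ncard : ℝ) := by
    have hBsub : hBfin.toFinset ⊆ FA := by
      intro a ha
      rw [hBfin.mem_toFinset] at ha
      exact hA.mem_toFinset.mpr ha.1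
    calc (B.ncard : ℝ) * (ε / 9 * X.ncard)
        = ∑ _a ∈ hBfin.toFinset, (ε / 9 * X.ncard) := by
          rw [Finset.sum_const, nsmul_eq_mul, Set.ncard_eq_toFinset_card B hBfin]
      _ ≤ ∑ a ∈ hBfin.toFinset, (((X * {a}) \ A).ncard : ℝ) := by
          apply Finset.sum_le_sum
          intro a ha
          exact hBbound a (hBfin.mem_toFinset.mp ha)
      _ ≤ ∑ a ∈ FA, (((X * {a}) \ A).ncard : ℝ) := by
          apply Finset.sum_le_sum_of_subset_of_nonneg hBsub
          intro a _ _; positivity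
  have hBfinal : (B.ncard : ℝ) ≤ ε / 18 * A.ncard := by
    have key : (B.ncard : ℝ) * (ε / 9 * X.ncard) ≤ X.ncard * (ε ^ 2 / 162 * A.ncard) :=
      le_trans hlb1 (hsum1 ▸ hub1)
    have h2 : (B.ncard : ℝ) * (ε / 9) ≤ (ε / 18 * A.ncard) * (ε / 9) := by
      apply (mul_le_mul_iff_of_pos_right hXpos).mp
      calc ((B.ncard : ℝ) * (ε / 9)) * X.ncard = (B.ncard : ℝ) * (ε / 9 * X.ncard) := by ring
        _ ≤ X.ncard * (ε ^ 2 / 162 * A.ncard) := key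
        _ = (ε / 18 * A.ncard * (ε / 9)) * X.ncard := by ring
    have hε9 : (0:ℝ) < ε / 9 := by positivity
    exact (mul_le_mul_iff_of_pos_right hε9).mp h2
  ---- Step C : |D \ A| ≤ ε²/126 |A|
  set T := D \ A with hT
  have hTfin : T.Finite := ((hA'fin.mul hSfin).subset hDA'S).subset Set.diff_subset
  set FT := hTfin.toFinset with hFT
  have hFTcard : (FT.card : ℝ) = T.ncard := by
    rw [Set.ncard_eq_toFinset_card T hTfin]
  have hTsmall : ∀ d ∈ T, (((X * {d}) \ A).ncard : ℝ) ≤ 2 * ε / 9 * X.ncard := by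
    rintro d ⟨hdD, hdA⟩
    obtain ⟨a, haA', s, hsS, rfl⟩ := hDA'S hdD
    have hXas : X * {a * s} = (X * {a}) * {s} := by
      rw [mul_assoc, Set.singleton_mul_singleton]
    have hsubset : (X * {a * s}) \ A ⊆ (((X * {a}) \ A) * {s}) ∪ ((A * {s}) \ A) := by
      rw [hXas]
      rintro y ⟨hy, hyA⟩
      rw [Set.mul_singleton] at hy
      obtain ⟨z, hzXa, rfl⟩ := hy
      by_cases hz : z ∈ A
      · exact Or.inr ⟨Set.mul_mem_mul hz (Set.mem_singleton s), hyA⟩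
      · exact Or.inl (Set.mul_mem_mul ⟨hzXa, hz⟩ (Set.mem_singleton s))
    have hfin1 : (((X * {a}) \ A) * {s}).Finite :=
      (((hXfin.mul (Set.finite_singleton a)).sdiff (t := A)).mul (Set.finite_singleton s))
    have hfin2 : ((A * {s}) \ A).Finite := (hA.mul (Set.finite_singleton s)).sdiff (t := A)
    have hcard : ((X * {a * s}) \ A).ncard
        ≤ (((X * {a}) \ A) * {s}).ncard + ((A * {s}) \ A).ncard :=
      le_trans (Set.ncard_le_ncard hsubset (hfin1.union hfin2)) (Set.ncard_union_le _ _)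
    have he1 : ((((X * {a}) \ A) * {s}).ncard : ℝ) < ε / 9 * X.ncard := by
      rw [Set.mul_singleton, Set.ncard_image_of_injective _ (mul_left_injective s)]
      rw [hA'] at haA'
      exact haA'.2
    have he2 : (((A * {s}) \ A).ncard : ℝ) ≤ ε / 9 * X.ncard := by
      have h1 : (((A * {s}) \ A).ncard : ℝ) ≤ ε * ν / 9 * A.ncard := by
        refine le_trans ?_ (hSmem s hsS)
        have : ((A * {s}) \ A).ncard ≤ ((A * {s}) ∆ A).ncard := by
          apply Set.ncard_le_ncard _ (hsymmR s)
          rw [Set.symmDiff_def]; exact Set.subset_union_left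
        exact_mod_cast this
      calc (((A * {s}) \ A).ncard : ℝ) ≤ ε * ν / 9 * A.ncard := h1
        _ = ε / 9 * (ν * A.ncard) := by ring
        _ ≤ ε / 9 * X.ncard := by
            apply mul_le_mul_of_nonneg_left hXApos (by positivity)
    have : (((X * {a * s}) \ A).ncard : ℝ)
        ≤ ((((X * {a}) \ A) * {s}).ncard : ℝ) + (((A * {s}) \ A).ncard : ℝ) := by
      exact_mod_cast hcard
    nlinarith
  have hTinter : ∀ d ∈ T, (7:ℝ) / 9 * X.ncard ≤ (((X * {d}) ∩ A).ncard : ℝ) := by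
    intro d hd
    have hXd : ((X * {d}).ncard : ℝ) = X.ncard := by
      rw [Set.mul_singleton, Set.ncard_image_of_injective _ (mul_left_injective d)]
    have hXdfin : (X * {d}).Finite := hXfin.mul (Set.finite_singleton d)
    have hunion : (X * {d}).ncard ≤ ((X * {d}) ∩ A).ncard + ((X * {d}) \ A).ncard := by
      calc (X * {d}).ncard = (((X * {d}) ∩ A) ∪ ((X * {d}) \ A)).ncard := by
            rw [Set.inter_union_diff]
        _ ≤ _ := Set.ncard_union_le _ _
    have h1 : ((X * {d}).ncard : ℝ) ≤ (((X * {d}) ∩ A).ncard : ℝ) + (((X * {d}) \ A).ncard : ℝ) := by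
      exact_mod_cast hunion
    have h2 := hTsmall d hd
    nlinarith
  -- second double counting
  have eC1 : ∀ d : G, ((X * {d}) ∩ A).ncard = (FX.filter (fun x => x * d ∈ A)).card := by
    intro d
    rw [Set.mul_singleton, image_inter_pred,
      Set.ncard_image_of_injective _ (mul_left_injective d), ncard_sep hXfin]
  have eC2 : ∀ x : G, ((x • T) ∩ A).ncard = (FT.filter (fun d => x * d ∈ A)).card := by
    intro x
    rw [smul_set_eq_image, image_inter_pred,
      Set.ncard_image_of_injective _ (mul_right_injective x), ncard_sep hTfin]
  have hsum2 : ∑ d ∈ FT, (((X * {d}) ∩ A).ncard : ℝ)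
      = ∑ x ∈ FX, (((x • T) ∩ A).ncard : ℝ) := by
    have : ∑ d ∈ FT, ((X * {d}) ∩ A).ncard = ∑ x ∈ FX, ((x • T) ∩ A).ncard := by
      simp_rw [eC1, eC2, Finset.card_filter]
      exact Finset.sum_comm
    exact_mod_cast congrArg Nat.cast this
  have hub2 : ∑ x ∈ FX, (((x • T) ∩ A).ncard : ℝ) ≤ X.ncard * (ε ^ 2 / 162 * A.ncard) := by
    calc ∑ x ∈ FX, (((x • T) ∩ A).ncard : ℝ)
        ≤ ∑ _x ∈ FX, (ε ^ 2 / 162 * A.ncard) := by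
          apply Finset.sum_le_sum
          intro x hx
          have hxX : x ∈ X := hXfin.mem_toFinset.mp hx
          refine le_trans ?_ (hXmem x hxX)
          have hsub : (x • T) ∩ A ⊆ (x • A) ∆ A := by
            rintro y ⟨⟨d, hd, rfl⟩, hyA⟩
            rw [Set.symmDiff_def]
            refine Set.mem_union_right _ ⟨hyA, ?_⟩
            rintro ⟨b, hb, hxb⟩
            have : d = b := by
              have := hxb
              simpa [smul_eq_mul, mul_right_injective x |>.eq_iff] using this.symm
            exact hd.2 (this ▸ hb)
          have : ((x • T) ∩ A).ncard ≤ ((x • A) ∆ A).ncard :=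
            Set.ncard_le_ncard hsub (hsymmL x)
          exact_mod_cast this
      _ = X.ncard * (ε ^ 2 / 162 * A.ncard) := by
          rw [Finset.sum_const, nsmul_eq_mul, hFXcard]
  have hlb2 : (T.ncard : ℝ) * ((7:ℝ) / 9 * X.ncard) ≤ ∑ d ∈ FT, (((X * {d}) ∩ A).ncard : ℝ) := by
    calc (T.ncard : ℝ) * ((7:ℝ) / 9 * X.ncard)
        = ∑ _d ∈ FT, ((7:ℝ) / 9 * X.ncard) := by
          rw [Finset.sum_const, nsmul_eq_mul, hFTcard]
      _ ≤ ∑ d ∈ FT, (((X * {d}) ∩ A).ncard : ℝ) := by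
          apply Finset.sum_le_sum
          intro d hd
          exact hTinter d (hTfin.mem_toFinset.mp hd)
  have hTfinal : (T.ncard : ℝ) ≤ ε ^ 2 / 126 * A.ncard := by
    have key : (T.ncard : ℝ) * ((7:ℝ) / 9 * X.ncard) ≤ X.ncard * (ε ^ 2 / 162 * A.ncard) :=
      le_trans hlb2 (hsum2 ▸ hub2)
    have h2 : (T.ncard : ℝ) * ((7:ℝ)/9) ≤ (ε ^ 2 / 126 * A.ncard) * ((7:ℝ)/9) := by
      apply (mul_le_mul_iff_of_pos_right hXpos).mp
      calc ((T.ncard : ℝ) * ((7:ℝ)/9)) * X.ncard = (T.ncard : ℝ) * ((7:ℝ)/9 * X.ncard) := by ring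
        _ ≤ X.ncard * (ε ^ 2 / 162 * A.ncard) := key
        _ = (ε ^ 2 / 126 * A.ncard * ((7:ℝ)/9)) * X.ncard := by ring
    have h79 : (0:ℝ) < (7:ℝ)/9 := by norm_num
    exact (mul_le_mul_iff_of_pos_right h79).mp h2
  ---- Step D : conclusion
  have hsubfinal : A ∆ D ⊆ B ∪ T := by
    rw [Set.symmDiff_def]
    apply Set.union_subset
    · intro y ⟨hyA, hyD⟩
      exact Set.mem_union_left _ ⟨hyA, fun h => hyD (hA'D h)⟩
    · intro y ⟨hyD, hyA⟩
      exact Set.mem_union_right _ ⟨hyD, hyA⟩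
  have hfinalcard : ((A ∆ D).ncard : ℝ) ≤ (B.ncard : ℝ) + (T.ncard : ℝ) := by
    have h1 : (A ∆ D).ncard ≤ (B ∪ T).ncard :=
      Set.ncard_le_ncard hsubfinal (hBfin.union hTfin)
    have h2 : (B ∪ T).ncard ≤ B.ncard + T.ncard := Set.ncard_union_le _ _
    exact_mod_cast le_trans h1 h2
  have hε2 : ε ^ 2 ≤ ε := by nlinarith
  have hcoef : ε / 18 + ε ^ 2 / 126 < ε := by nlinarith
  have hAD : ((A ∆ D).ncard : ℝ) ≤ (ε / 18 + ε ^ 2 / 126) * A.ncard := by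
    rw [add_mul]; linarith
  exact lt_of_le_of_lt hAD (mul_lt_mul_of_pos_right hcoef hAcard)
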